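/- For p ∈ {2, 3, 7} and all natural numbers n, the Apéry number A1(n) = \sum_{k=0}^n \binom{n}{k}^2 \binom{n+k}{k}^2 is not divisible by p. -/

import Mathlib

open Finset

def A1 (n : ℕ) : ℤ :=
  ∑ k ∈ Finset.range (n + 1), (n.choose k : ℤ) ^ 2 * ((n + k).choose k : ℤ) ^ 2

lemma lucasZ (p : ℕ) [Fact p.Prime] (n k : ℕ) :
    ((n.choose k : ZMod p)) =
      ((n % p).choose (k % p) : ZMod p) * ((n / p).choose (k / p) : ZMod p) := by
  have h := Choose.choose_modEq_choose_mod_mul_choose_div (p := p) (n := n) (k := k)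
  have h2 := (ZMod.intCast_eq_intCast_iff _ _ _).mpr h
  push_cast at h2 ⊢
  exact h2

lemma A1_cast (p n : ℕ) :
    ((A1 n : ℤ) : ZMod p) =
      ∑ k ∈ range (n + 1), (n.choose k : ZMod p) ^ 2 * ((n + k).choose k : ZMod p) ^ 2 := by
  unfold A1
  push_cast
  rfl

lemma A1_key (p : ℕ) [hp : Fact p.Prime] (m r : ℕ) (hr : r < p) :
    ((A1 (p * m + r) : ℤ) : ZMod p) = ((A1 m : ℤ) : ZMod p) * ((A1 r : ℤ) : ZMod p) := by
  have hp0 : 0 < p := hp.out.pos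
  have em : ∀ a b : ℕ, b < p → (p * a + b) % p = b := by
    intro a b h; rw [Nat.mul_add_mod, Nat.mod_eq_of_lt h]
  have ed : ∀ a b : ℕ, b < p → (p * a + b) / p = a := by
    intro a b h; rw [Nat.mul_add_div hp0, Nat.div_eq_of_lt h, Nat.add_zero]
  set f : ℕ → ZMod p := fun k =>
    ((p * m + r).choose k : ZMod p) ^ 2 * ((p * m + r + k).choose k : ZMod p) ^ 2 with hf
  have hA : ((A1 (p * m + r) : ℤ) : ZMod p) = ∑ k ∈ range (p * m + r + 1), f k :=
    A1_cast p (p * m + r)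
  have hsub : range (p * m + r + 1) ⊆ range (p * (m + 1)) := by
    apply range_subset_range.mpr
    have : p * (m + 1) = p * m + p := by ring
    omega
  have hext : ∑ k ∈ range (p * m + r + 1), f k = ∑ k ∈ range (p * (m + 1)), f k := by
    apply Finset.sum_subset hsub
    intro k _ hk'
    simp only [mem_range, not_lt] at hk'
    have hlt : p * m + r < k := by omega
    simp [hf, Nat.choose_eq_zero_of_lt hlt]
  have hsplit : ∑ k ∈ range (p * (m + 1)), f k =
      ∑ j ∈ range (m + 1), ∑ s ∈ range p, f (p * j + s) := by
    induction (m + 1) with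
    | zero => simp
    | succ M ih =>
      rw [Nat.mul_succ, Finset.sum_range_add, ih, Finset.sum_range_succ]
  have hterm : ∀ j s : ℕ, s < p → f (p * j + s) =
      ((m.choose j : ZMod p) ^ 2 * ((m + j).choose j : ZMod p) ^ 2) *
        ((r.choose s : ZMod p) ^ 2 * ((r + s).choose s : ZMod p) ^ 2) := by
    intro j s hs
    have h1 : ((p * m + r).choose (p * j + s) : ZMod p) =
        (r.choose s : ZMod p) * (m.choose j : ZMod p) := by
      rw [lucasZ p, em m r hr, em j s hs, ed m r hr, ed j s hs]
    by_cases hrs : r + s < p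
    · have e1 : p * m + r + (p * j + s) = p * (m + j) + (r + s) := by ring
      have h2 : ((p * m + r + (p * j + s)).choose (p * j + s) : ZMod p) =
          ((r + s).choose s : ZMod p) * ((m + j).choose j : ZMod p) := by
        rw [e1, lucasZ p, em (m + j) (r + s) hrs, em j s hs, ed (m + j) (r + s) hrs, ed j s hs]
      simp only [hf, h1, h2]
      ring
    · have hge : p ≤ r + s := le_of_not_gt hrs
      have hlt2 : r + s - p < s := by omega
      have hz : (r + s - p).choose s = 0 := Nat.choose_eq_zero_of_lt hlt2
      have e1 : p * m + r + (p * j + s) = p * (m + j + 1) + (r + s - p) := by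
        have h3 : p * (m + j + 1) = p * m + p * j + p := by ring
        omega
      have hb : r + s - p < p := by omega
      have h2 : ((p * m + r + (p * j + s)).choose (p * j + s) : ZMod p) = 0 := by
        rw [e1, lucasZ p, em (m + j + 1) (r + s - p) hb, em j s hs, hz]
        simp
      have e2 : r + s = p * 1 + (r + s - p) := by omega
      have h4 : ((r + s).choose s : ZMod p) = 0 := by
        rw [lucasZ p, e2, em 1 (r + s - p) hb, Nat.mod_eq_of_lt hs, hz]
        simp
      simp only [hf, h2, h4]
      ring
  have hprod : ∑ j ∈ range (m + 1), ∑ s ∈ range p, f (p * j + s) =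
      (∑ j ∈ range (m + 1), (m.choose j : ZMod p) ^ 2 * ((m + j).choose j : ZMod p) ^ 2) *
        (∑ s ∈ range p, (r.choose s : ZMod p) ^ 2 * ((r + s).choose s : ZMod p) ^ 2) := by
    rw [Finset.sum_mul_sum]
    apply Finset.sum_congr rfl
    intro j _
    apply Finset.sum_congr rfl
    intro s hsmem
    exact hterm j s (mem_range.mp hsmem)
  have hr_sum : ∑ s ∈ range p, (r.choose s : ZMod p) ^ 2 * ((r + s).choose s : ZMod p) ^ 2 =
      ∑ s ∈ range (r + 1), (r.choose s : ZMod p) ^ 2 * ((r + s).choose s : ZMod p) ^ 2 := by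
    symm
    apply Finset.sum_subset (range_subset_range.mpr (by omega))
    intro s _ hs'
    simp only [mem_range, not_lt] at hs'
    have : r < s := by omega
    simp [Nat.choose_eq_zero_of_lt this]
  rw [hA, hext, hsplit, hprod, hr_sum, A1_cast p m, A1_cast p r]

lemma A1_ne_zero (p : ℕ) [hp : Fact p.Prime]
    (hbase : ∀ r, r < p → ((A1 r : ℤ) : ZMod p) ≠ 0) :
    ∀ n, ((A1 n : ℤ) : ZMod p) ≠ 0 := by
  intro n
  induction n using Nat.strong_induction_on with
  | _ n ih =>
    by_cases h : n < p
    · exact hbase n h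
    · have hp2 : 2 ≤ p := hp.out.two_le
      have hkey := A1_key p (n / p) (n % p) (Nat.mod_lt n (by omega))
      rw [Nat.div_add_mod] at hkey
      rw [hkey]
      exact mul_ne_zero (ih _ (Nat.div_lt_self (by omega) (by omega)))
        (ih _ (lt_of_lt_of_le (Nat.mod_lt n (by omega)) (le_of_not_gt h)))

theorem apery1_coprime_237 (p : ℕ) (hp : p = 2 ∨ p = 3 ∨ p = 7) (n : ℕ) :
    ¬ (p : ℤ) ∣ A1 n := by
  have hprime : p.Prime := by rcases hp with h | h | h <;> subst h <;> norm_num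
  haveI : Fact p.Prime := ⟨hprime⟩
  intro hdvd
  have h0 : ((A1 n : ℤ) : ZMod p) = 0 := (ZMod.intCast_zmod_eq_zero_iff_dvd _ _).mpr hdvd
  refine A1_ne_zero p ?_ n h0
  intro r hrp hzero
  have hdv : (p : ℤ) ∣ A1 r := (ZMod.intCast_zmod_eq_zero_iff_dvd _ _).mp hzero
  rcases hp with h | h | h <;> subst h <;> interval_cases r <;>
    norm_num [A1, Finset.sum_range_succ, Nat.choose] at hdv
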